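/- Let K : ℝ → [0,∞) be measurable and Lebesgue-integrable with K(x) = 0 for |x| > 1 and ∫_ℝ K = 1, and let g : ℝ → ℝ be twice continuously differentiable with |g″(t)| ≤ B for all t. For u ∈ [0,1] and h ∈ (0,1] define ξ₁(u,h) = (1/h)∫₀¹ K((v − u)/h) dv and ξ₂(u,h) = (1/h)∫₀¹ ((v − u)/h)·K((v − u)/h) dv. Then for every u ∈ [0,1] and h ∈ (0,1]: | (1/h)∫₀¹ K((v − u)/h)·g(v) dv − g(u)·ξ₁(u,h) − h·g′(u)·ξ₂(u,h) | ≤ (B/2)·h². -/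

import Mathlib

open MeasureTheory intervalIntegral

private lemma taylor_aux (g : ℝ → ℝ) (hg : ContDiff ℝ 2 g) (B : ℝ)
    (hB : ∀ t, |deriv (deriv g) t| ≤ B) (u v : ℝ) :
    |g v - g u - deriv g u * (v - u)| ≤ B / 2 * (v - u) ^ 2 := by
  have hBnn : 0 ≤ B := le_trans (abs_nonneg _) (hB 0)
  have hg1 : Differentiable ℝ g := hg.differentiable (by norm_num)
  have hdg : Differentiable ℝ (deriv g) := by
    have := (contDiff_succ_iff_deriv (n := 1)).mp (by exact_mod_cast hg)
    exact this.2.2.differentiable (by norm_num)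
  have hlip : LipschitzWith B.toNNReal (deriv g) := by
    apply lipschitzWith_of_nnnorm_deriv_le hdg
    intro x
    rw [← NNReal.coe_le_coe]
    simpa [Real.coe_toNNReal _ hBnn, Real.norm_eq_abs] using hB x
  have hlip' : ∀ t, |deriv g t - deriv g u| ≤ B * |t - u| := by
    intro t
    have := hlip.dist_le_mul t u
    simpa [Real.dist_eq, Real.coe_toNNReal _ hBnn] using this
  have hcont : Continuous (deriv g) := hdg.continuous
  have hftc : g v - g u = ∫ t in u..v, deriv g t :=
    (integral_deriv_eq_sub (fun t _ => hg1.differentiableAt)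
      (hcont.intervalIntegrable _ _)).symm
  have hconst : deriv g u * (v - u) = ∫ t in u..v, deriv g u := by
    simp [mul_comm]
  have hrem : g v - g u - deriv g u * (v - u) = ∫ t in u..v, (deriv g t - deriv g u) := by
    rw [hftc, hconst, ← integral_sub (hcont.intervalIntegrable _ _) intervalIntegrable_const]
  rw [hrem]
  have hnorm : |∫ t in u..v, (deriv g t - deriv g u)| ≤
      |∫ t in u..v, abs (deriv g t - deriv g u)| := by
    simpa [Real.norm_eq_abs] using
      norm_integral_le_abs_integral_norm (f := fun t => deriv g t - deriv g u) (a := u) (b := v)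
        (μ := volume)
  refine hnorm.trans ?_
  have hint1 : IntervalIntegrable (fun t => |deriv g t - deriv g u|) volume u v :=
    ((hcont.sub continuous_const).abs.intervalIntegrable _ _)
  rcases le_total u v with huv | huv
  · have h1 : (∫ t in u..v, abs (deriv g t - deriv g u)) ≤ ∫ t in u..v, B * (t - u) := by
      apply integral_mono_on huv hint1
      · exact ((continuous_const.mul (continuous_id.sub continuous_const)).intervalIntegrable _ _)
      · intro t ht
        calc |deriv g t - deriv g u| ≤ B * |t - u| := hlip' t
          _ = B * (t - u) := by rw [abs_of_nonneg (by linarith [ht.1])]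
    have h2 : (∫ t in u..v, B * (t - u)) = B / 2 * (v - u) ^ 2 := by
      rw [intervalIntegral.integral_const_mul]
      have : (∫ t in u..v, (t - u)) = ∫ t in u - u..v - u, t :=
        integral_comp_sub_right (fun t => t) u
      rw [this, integral_id]
      ring
    have h0 : 0 ≤ ∫ t in u..v, abs (deriv g t - deriv g u) :=
      integral_nonneg huv (fun t _ => abs_nonneg _)
    rw [abs_of_nonneg h0]
    linarith
  · rw [integral_symm]
    have h1 : (∫ t in v..u, abs (deriv g t - deriv g u)) ≤ ∫ t in v..u, B * (u - t) := by
      apply integral_mono_on huv hint1.symm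
      · exact ((continuous_const.mul (continuous_const.sub continuous_id)).intervalIntegrable _ _)
      · intro t ht
        calc |deriv g t - deriv g u| ≤ B * |t - u| := hlip' t
          _ = B * (u - t) := by rw [abs_of_nonpos (by linarith [ht.2]), neg_sub]
    have h2 : (∫ t in v..u, B * (u - t)) = B / 2 * (v - u) ^ 2 := by
      rw [intervalIntegral.integral_const_mul]
      have : (∫ t in v..u, (u - t)) = ∫ t in u - u..u - v, t :=
        integral_comp_sub_left (fun t => t) u
      rw [this, integral_id]
      ring
    have h0 : 0 ≤ ∫ t in v..u, abs (deriv g t - deriv g u) :=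
      integral_nonneg huv (fun t _ => abs_nonneg _)
    rw [abs_neg, abs_of_nonneg h0]
    linarith

/-- Second-order boundary-aware bias expansion of kernel smoothing: for a nonnegative
kernel `K` supported in `[−1,1]` with unit integral and a `C²` function `g` with
`|g″| ≤ B`, the smoothed value `(1/h)∫₀¹K((v−u)/h)g(v)dv` equals
`g(u)·ξ₁(u,h) + h·g′(u)·ξ₂(u,h)` up to an error of at most `(B/2)h²`. -/
theorem stmt15 (K : ℝ → ℝ) (hKmeas : Measurable K) (hK0 : ∀ x, 0 ≤ K x)
    (hKint : Integrable K) (hKsupp : ∀ x : ℝ, 1 < |x| → K x = 0)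
    (hK1 : ∫ x, K x = 1)
    (g : ℝ → ℝ) (hg : ContDiff ℝ 2 g) (B : ℝ) (hB : ∀ t, |deriv (deriv g) t| ≤ B) :
    ∀ u ∈ Set.Icc (0:ℝ) 1, ∀ h ∈ Set.Ioc (0:ℝ) 1,
      |(1/h) * (∫ v in (0:ℝ)..1, K ((v - u) / h) * g v)
          - g u * ((1/h) * ∫ v in (0:ℝ)..1, K ((v - u) / h))
          - h * deriv g u * ((1/h) * ∫ v in (0:ℝ)..1, ((v - u) / h) * K ((v - u) / h))|
        ≤ (B / 2) * h ^ 2 := by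
  intro u hu h hh
  obtain ⟨hh0, hh1⟩ := hh
  have hn : h ≠ 0 := ne_of_gt hh0
  have hBnn : 0 ≤ B := le_trans (abs_nonneg _) (hB 0)
  have cg : Continuous g := hg.continuous
  have IKfull : Integrable (fun v => K ((v - u) / h)) :=
    (hKint.comp_div hn).comp_sub_right u
  have IK : IntervalIntegrable (fun v => K ((v - u) / h)) volume 0 1 :=
    IKfull.intervalIntegrable
  have Ig : IntervalIntegrable (fun v => K ((v - u) / h) * g v) volume 0 1 :=
    IK.mul_continuousOn cg.continuousOn
  have Iv : IntervalIntegrable (fun v => (v - u) * K ((v - u) / h)) volume 0 1 :=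
    IK.continuousOn_mul ((continuous_id.sub continuous_const).continuousOn)
  have cR : Continuous (fun v => g v - g u - deriv g u * (v - u)) := by
    continuity
  have IR : IntervalIntegrable
      (fun v => K ((v - u) / h) * (g v - g u - deriv g u * (v - u))) volume 0 1 :=
    IK.mul_continuousOn cR.continuousOn
  -- pointwise bound
  have hpt : ∀ v : ℝ,
      |K ((v - u) / h) * (g v - g u - deriv g u * (v - u))| ≤
      K ((v - u) / h) * (B / 2 * h ^ 2) := by
    intro v
    by_cases hz : K ((v - u) / h) = 0
    · simp [hz]
    · have hvu : |v - u| ≤ h := by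
        by_contra hc
        push_neg at hc
        apply hz
        apply hKsupp
        rw [abs_div, abs_of_pos hh0]
        rw [lt_div_iff₀ hh0]
        simpa using hc
      have htay := taylor_aux g hg B hB u v
      have hsq : (v - u) ^ 2 ≤ h ^ 2 := by
        have := sq_abs (v - u)
        nlinarith [abs_nonneg (v - u)]
      rw [abs_mul, abs_of_nonneg (hK0 _)]
      apply mul_le_mul_of_nonneg_left _ (hK0 _)
      calc |g v - g u - deriv g u * (v - u)| ≤ B / 2 * (v - u) ^ 2 := htay
        _ ≤ B / 2 * h ^ 2 := by nlinarith
  -- rewrite the expression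
  have e3 : (∫ v in (0:ℝ)..1, ((v - u) / h) * K ((v - u) / h)) =
      (1/h) * ∫ v in (0:ℝ)..1, (v - u) * K ((v - u) / h) := by
    rw [← intervalIntegral.integral_const_mul]
    apply integral_congr
    intro x _
    ring
  have e4 : (∫ v in (0:ℝ)..1, K ((v - u) / h) * (g v - g u - deriv g u * (v - u))) =
      (∫ v in (0:ℝ)..1, K ((v - u) / h) * g v)
        - g u * (∫ v in (0:ℝ)..1, K ((v - u) / h))
        - deriv g u * ∫ v in (0:ℝ)..1, (v - u) * K ((v - u) / h) := by
    rw [show (fun v => K ((v - u) / h) * (g v - g u - deriv g u * (v - u))) =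
        fun v => (K ((v - u) / h) * g v - g u * K ((v - u) / h))
          - deriv g u * ((v - u) * K ((v - u) / h)) from by funext v; ring]
    rw [integral_sub (Ig.sub (IK.const_mul (g u))) (Iv.const_mul _),
      integral_sub Ig (IK.const_mul _), intervalIntegral.integral_const_mul, intervalIntegral.integral_const_mul]
  have key : (1/h) * (∫ v in (0:ℝ)..1, K ((v - u) / h) * g v)
          - g u * ((1/h) * ∫ v in (0:ℝ)..1, K ((v - u) / h))
          - h * deriv g u * ((1/h) * ∫ v in (0:ℝ)..1, ((v - u) / h) * K ((v - u) / h))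
      = (1/h) * ∫ v in (0:ℝ)..1, K ((v - u) / h) * (g v - g u - deriv g u * (v - u)) := by
    rw [e3, e4]
    field_simp
  rw [key]
  -- kernel mass bound
  have e5 : (∫ v in (0:ℝ)..1, K ((v - u) / h)) =
      h * ∫ x in (0 - u)/h..(1 - u)/h, K x := by
    have h1 : (∫ v in (0:ℝ)..1, (fun x => K (x / h)) (v - u)) =
        ∫ x in (0:ℝ) - u..1 - u, K (x / h) :=
      integral_comp_sub_right (fun x => K (x / h)) u
    have h2 : (∫ x in (0:ℝ) - u..1 - u, K (x / h)) =
        h • ∫ x in ((0:ℝ) - u)/h..(1 - u)/h, K x := integral_comp_div _ hn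
    simp only [smul_eq_mul] at h2
    rw [← h2, ← h1]
  have e6 : (∫ x in ((0:ℝ) - u)/h..(1 - u)/h, K x) ≤ 1 := by
    rw [← hK1, integral_of_le (by gcongr <;> linarith)]
    exact setIntegral_le_integral hKint (ae_of_all _ hK0)
  have e7 : (0:ℝ) ≤ ∫ x in ((0:ℝ) - u)/h..(1 - u)/h, K x := by
    exact integral_nonneg (by gcongr <;> linarith) (fun x _ => hK0 x)
  have hKmass : (∫ v in (0:ℝ)..1, K ((v - u) / h)) ≤ h := by
    rw [e5]
    nlinarith
  have hKmass0 : 0 ≤ (∫ v in (0:ℝ)..1, K ((v - u) / h)) := by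
    rw [e5]; positivity
  -- final bound
  have habs : |∫ v in (0:ℝ)..1, K ((v - u) / h) * (g v - g u - deriv g u * (v - u))| ≤
      ∫ v in (0:ℝ)..1, abs (K ((v - u) / h) * (g v - g u - deriv g u * (v - u))) := by
    rw [integral_of_le (by norm_num : (0:ℝ) ≤ 1), integral_of_le (by norm_num : (0:ℝ) ≤ 1)]
    have h1 := MeasureTheory.norm_integral_le_integral_norm
        (μ := volume.restrict (Set.Ioc (0:ℝ) 1))
        (fun v => K ((v - u) / h) * (g v - g u - deriv g u * (v - u)))
    simp only [Real.norm_eq_abs] at h1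
    exact h1
  have hmono : (∫ v in (0:ℝ)..1,
        abs (K ((v - u) / h) * (g v - g u - deriv g u * (v - u)))) ≤
      ∫ v in (0:ℝ)..1, K ((v - u) / h) * (B / 2 * h ^ 2) := by
    apply integral_mono_on (by norm_num) IR.abs (IK.mul_const _)
    intro t _
    exact hpt t
  have hmul : (∫ v in (0:ℝ)..1, K ((v - u) / h) * (B / 2 * h ^ 2)) =
      (B / 2 * h ^ 2) * ∫ v in (0:ℝ)..1, K ((v - u) / h) :=
    (intervalIntegral.integral_mul_const _ _).trans (mul_comm _ _)
  rw [abs_mul, abs_of_pos (by positivity : (0:ℝ) < 1/h)]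
  calc (1/h) * |∫ v in (0:ℝ)..1, K ((v - u) / h) * (g v - g u - deriv g u * (v - u))|
      ≤ (1/h) * ((B / 2 * h ^ 2) * ∫ v in (0:ℝ)..1, K ((v - u) / h)) := by
        apply mul_le_mul_of_nonneg_left _ (by positivity)
        refine habs.trans (hmono.trans ?_)
        rw [hmul]
    _ ≤ (1/h) * ((B / 2 * h ^ 2) * h) := by
        apply mul_le_mul_of_nonneg_left _ (by positivity)
        apply mul_le_mul_of_nonneg_left hKmass (by positivity)
    _ = (B / 2) * h ^ 2 := by field_simp
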